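/- Every reversible element of G_n is strongly reversible in G_n: if f ∈ G_n and there exists h ∈ G_n with h f h⁻¹ = f⁻¹, then there exists an involution T ∈ G_n (T² = identity) with T f T⁻¹ = f⁻¹. -/

import Mathlib

abbrev Circle1 : Type := AddCircle (1 : ℝ)

abbrev Gn (n : ℕ) : Type := (Fin n → Circle1) × Equiv.Perm (Fin n)

namespace Gn
variable {n : ℕ}

noncomputable instance : Mul (Gn n) := ⟨fun f g => ⟨fun j => g.1 j + f.1 (g.2 j), f.2 * g.2⟩⟩
noncomputable instance : One (Gn n) := ⟨⟨fun _ => 0, 1⟩⟩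
noncomputable instance : Inv (Gn n) := ⟨fun f => ⟨fun j => -f.1 (f.2⁻¹ j), f.2⁻¹⟩⟩

noncomputable instance : Group (Gn n) where
  mul_assoc f g h := Prod.ext (funext fun j => (add_assoc _ _ _).symm) rfl
  one_mul f := Prod.ext (funext fun j => add_zero _) (one_mul _)
  mul_one f := Prod.ext (funext fun j => zero_add _) (mul_one _)
  inv_mul_cancel f := Prod.ext
    (funext fun j => show f.1 j + -f.1 (f.2⁻¹ (f.2 j)) = 0 by simp)
    (inv_mul_cancel _)

@[simp] lemma mul_fst (f g : Gn n) (j : Fin n) : (f * g).1 j = g.1 j + f.1 (g.2 j) := rfl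
@[simp] lemma mul_snd (f g : Gn n) : (f * g).2 = f.2 * g.2 := rfl
@[simp] lemma one_fst (j : Fin n) : (1 : Gn n).1 j = 0 := rfl
@[simp] lemma one_snd : (1 : Gn n).2 = 1 := rfl
@[simp] lemma inv_fst (f : Gn n) (j : Fin n) : (f⁻¹).1 j = -f.1 (f.2⁻¹ j) := rfl
@[simp] lemma inv_snd (f : Gn n) : (f⁻¹).2 = f.2⁻¹ := rfl


end Gn

theorem Equiv.Perm.inv_apply_self {α : Type*} (f : Equiv.Perm α) (x : α) : f⁻¹ (f x) = x :=
  f.symm_apply_apply x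

theorem Equiv.Perm.apply_inv_self {α : Type*} (f : Equiv.Perm α) (x : α) : f (f⁻¹ x) = x :=
  f.apply_symm_apply x

namespace StrRev
open Equiv Function MulAction Finset

attribute [local instance] Classical.propDecidable

variable {n : ℕ} (σ τ : Equiv.Perm (Fin n)) (α β : Fin n → Circle1)

/-! ### period basics -/

noncomputable def kk (x : Fin n) : ℕ := MulAction.period σ x

lemma kpos (x : Fin n) : 0 < kk σ x :=
  MulAction.period_pos_of_orderOf_pos (orderOf_pos σ) x

lemma zfix (x : Fin n) (m : ℤ) : (σ ^ m) x = x ↔ (kk σ x : ℤ) ∣ m := by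
  simpa [Equiv.Perm.smul_def, kk] using
    (MulAction.zpow_smul_eq_iff_period_dvd (g := σ) (a := x) (j := m))

lemma nfix (x : Fin n) (m : ℕ) : (σ ^ m) x = x ↔ kk σ x ∣ m := by
  simpa [Equiv.Perm.smul_def, kk] using
    (MulAction.pow_smul_eq_iff_period_dvd (m := σ) (a := x) (n := m))

lemma pow_k_fix (x : Fin n) : (σ ^ (kk σ x)) x = x := (nfix σ x _).mpr dvd_rfl

lemma pow_mod (x : Fin n) (m : ℕ) : (σ ^ (m % kk σ x)) x = (σ ^ m) x := by
  conv_rhs => rw [← Nat.mod_add_div m (kk σ x)]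
  rw [pow_add, Equiv.Perm.mul_apply, (nfix σ x _).mpr (dvd_mul_right _ _)]

lemma zapp (a b : ℤ) (x : Fin n) : (σ ^ a) ((σ ^ b) x) = (σ ^ (a + b)) x := by
  rw [← Equiv.Perm.mul_apply, ← zpow_add]

lemma fix_conj (a : ℤ) (x : Fin n) (c : ℤ) :
    ((σ ^ c) ((σ ^ a) x) = (σ ^ a) x) ↔ (σ ^ c) x = x := by
  constructor
  · intro h
    have := congrArg (σ ^ (-a)) h
    rw [zapp, zapp, zapp] at this
    rw [show -a + c + a = c by ring, show -a + a = (0:ℤ) by ring] at this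
    simpa using this
  · intro h
    have := congrArg (σ ^ a) h
    rw [zapp] at this
    rw [show a + c = c + a by ring] at this
    rw [← zapp] at this
    exact this

lemma k_eq_of (x y : Fin n) (H : ∀ j : ℤ, (σ ^ j) y = y ↔ (σ ^ j) x = x) :
    kk σ y = kk σ x := by
  refine Nat.dvd_antisymm ?_ ?_
  · have h1 : (σ ^ (kk σ x : ℤ)) y = y := (H _).mpr ((zfix σ x _).mpr dvd_rfl)
    exact_mod_cast Int.natCast_dvd_natCast.mp ((zfix σ y _).mp h1)
  · have h1 : (σ ^ (kk σ y : ℤ)) x = x := (H _).mp ((zfix σ y _).mpr dvd_rfl)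
    exact_mod_cast Int.natCast_dvd_natCast.mp ((zfix σ x _).mp h1)

lemma k_z (a : ℤ) (x : Fin n) : kk σ ((σ ^ a) x) = kk σ x :=
  k_eq_of σ _ _ (fun j => fix_conj σ a x j)

lemma zeqz (x : Fin n) {a b : ℤ} : (σ ^ a) x = (σ ^ b) x ↔ (kk σ x : ℤ) ∣ (b - a) := by
  constructor
  · intro hh
    have h2 : (σ ^ (b - a)) ((σ ^ a) x) = (σ ^ b) x := by rw [zapp]; ring_nf
    rw [← hh] at h2
    have h3 := (zfix σ ((σ ^ a) x) (b - a)).mp h2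
    rwa [k_z] at h3
  · intro hh
    have h2 : (σ ^ (b - a)) x = x := (zfix σ x _).mpr hh
    have := congrArg (σ ^ a) h2
    rw [zapp] at this
    rw [show a + (b - a) = b by ring] at this
    exact this.symm ▸ rfl

lemma k_sc {x y : Fin n} (h : σ.SameCycle x y) : kk σ y = kk σ x := by
  obtain ⟨m, rfl⟩ := h; exact k_z σ m x

/-! ### rep and discrete log -/

noncomputable def St : Setoid (Fin n) :=
  ⟨σ.SameCycle, ⟨Equiv.Perm.SameCycle.refl σ, Equiv.Perm.SameCycle.symm,
    Equiv.Perm.SameCycle.trans⟩⟩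

noncomputable def rep (x : Fin n) : Fin n := Quotient.out (Quotient.mk (St σ) x)

lemma rep_spec (x : Fin n) : σ.SameCycle (rep σ x) x :=
  Quotient.exact (Quotient.out_eq (Quotient.mk (St σ) x))

lemma rep_congr {x y : Fin n} (h : σ.SameCycle x y) : rep σ x = rep σ y :=
  congrArg Quotient.out (Quotient.sound h)

lemma rep_idem (x : Fin n) : rep σ (rep σ x) = rep σ x :=
  congrArg Quotient.out (Quotient.out_eq _)

lemma k_rep (x : Fin n) : kk σ (rep σ x) = kk σ x :=
  (k_sc σ (rep_spec σ x)).symm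

noncomputable def dd (x : Fin n) : ℕ :=
  Classical.choose ((rep_spec σ x).exists_pow_eq'')

lemma dd_spec (x : Fin n) : (σ ^ (dd σ x)) (rep σ x) = x :=
  (Classical.choose_spec ((rep_spec σ x).exists_pow_eq'')).2.2

lemma dd_spec_z (x : Fin n) : (σ ^ (dd σ x : ℤ)) (rep σ x) = x := by
  rw [zpow_natCast]; exact dd_spec σ x

/-! ### SameCycle helpers -/

lemma sc_zpow (m : ℤ) (x : Fin n) : σ.SameCycle x ((σ ^ m) x) := ⟨m, rfl⟩

lemma sc_apply (x : Fin n) : σ.SameCycle x (σ x) := ⟨1, by simp⟩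

lemma sc_inv_apply (x : Fin n) : σ.SameCycle x (σ⁻¹ x) := ⟨-1, by simp⟩

/-! ### reverser consequences -/

def Pp : Prop := τ * σ * τ⁻¹ = σ⁻¹

variable {σ τ}

lemma hp_mul (hP : Pp σ τ) : τ * σ = σ⁻¹ * τ := by
  rw [← hP]; group

lemma hp_inv (hP : Pp σ τ) : Pp σ τ⁻¹ := by
  have e1 : τ⁻¹ * σ⁻¹ * τ = σ := by rw [← hP]; group
  show τ⁻¹ * σ * τ⁻¹⁻¹ = σ⁻¹
  rw [inv_inv]
  calc τ⁻¹ * σ * τ = (τ⁻¹ * σ⁻¹ * τ)⁻¹ := by group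
  _ = σ⁻¹ := by rw [e1]

lemma zconj (hP : Pp σ τ) (m : ℤ) (i : Fin n) : τ ((σ ^ m) i) = (σ ^ (-m)) (τ i) := by
  have h1 : τ * σ ^ m * τ⁻¹ = σ ^ (-m) := by
    rw [← conj_zpow, hP, inv_zpow, zpow_neg]
  have h2 : τ * σ ^ m = σ ^ (-m) * τ := by rw [← h1]; group
  calc τ ((σ ^ m) i) = (τ * σ ^ m) i := by rw [Equiv.Perm.mul_apply]
  _ = (σ ^ (-m) * τ) i := by rw [h2]
  _ = (σ ^ (-m)) (τ i) := by rw [Equiv.Perm.mul_apply]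

lemma hp1 (hP : Pp σ τ) (i : Fin n) : τ (σ i) = σ⁻¹ (τ i) := by
  have := zconj hP 1 i
  simpa using this

lemma sc_tau (hP : Pp σ τ) {x y : Fin n} (h : σ.SameCycle x y) :
    σ.SameCycle (τ x) (τ y) := by
  obtain ⟨m, rfl⟩ := h
  exact ⟨-m, (zconj hP m x).symm⟩

lemma k_tau (hP : Pp σ τ) (x : Fin n) : kk σ (τ x) = kk σ x := by
  refine k_eq_of σ x (τ x) (fun j => ?_)
  constructor
  · intro h
    have h2 : τ ((σ ^ (-j)) x) = τ x := by rw [zconj hP]; simpa using h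
    have h3 := τ.injective h2
    have h4 := (zfix σ x (-j)).mp h3
    rw [dvd_neg] at h4
    exact (zfix σ x j).mpr h4
  · intro h
    have h4 := (zfix σ x j).mp h
    have h3 : (σ ^ (-j)) x = x := (zfix σ x (-j)).mpr (by rwa [dvd_neg])
    have := congrArg τ h3
    rw [zconj hP] at this
    simpa using this

/-! ### orbits and orbit sums -/

variable (σ τ)

noncomputable def Ob (x : Fin n) : Finset (Fin n) := Finset.univ.filter (σ.SameCycle x)

lemma mem_Ob {x j : Fin n} : j ∈ Ob σ x ↔ σ.SameCycle x j := by simp [Ob]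

lemma Ob_congr {x y : Fin n} (h : σ.SameCycle x y) : Ob σ x = Ob σ y := by
  ext j; simp only [mem_Ob]
  exact ⟨fun h2 => h.symm.trans h2, fun h2 => h.trans h2⟩

noncomputable def Sb (x : Fin n) : Circle1 := ∑ j ∈ Ob σ x, α j

lemma Sb_congr {x y : Fin n} (h : σ.SameCycle x y) : Sb σ α x = Sb σ α y := by
  unfold Sb; rw [Ob_congr σ h]

lemma sum_shift (x : Fin n) (g : Fin n → Circle1) :
    ∑ j ∈ Ob σ x, g (σ j) = ∑ j ∈ Ob σ x, g j := by
  refine Finset.sum_nbij' (fun j => σ j) (fun j => σ⁻¹ j) ?_ ?_ ?_ ?_ ?_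
  · intro a ha; rw [mem_Ob] at ha ⊢; exact ha.trans (sc_apply σ a)
  · intro a ha; rw [mem_Ob] at ha ⊢; exact ha.trans (sc_inv_apply σ a)
  · intro a _; simp
  · intro a _; simp
  · intro a _; rfl

def Ee : Prop := ∀ i, β (σ i) - β i + α i + α (σ⁻¹ (τ i)) = 0

variable {σ τ α β}

lemma Sb_tau (hP : Pp σ τ) (hE : Ee σ τ α β) (x : Fin n) :
    Sb σ α (τ x) = - Sb σ α x := by
  have h0 : ∑ j ∈ Ob σ x, (β (σ j) - β j + α j + α (σ⁻¹ (τ j))) = 0 :=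
    Finset.sum_eq_zero (fun j _ => hE j)
  rw [Finset.sum_add_distrib, Finset.sum_add_distrib, Finset.sum_sub_distrib] at h0
  rw [sum_shift σ x β, sub_self, zero_add] at h0
  have h1 : ∑ j ∈ Ob σ x, α (σ⁻¹ (τ j)) = Sb σ α (τ x) := by
    refine Finset.sum_nbij' (fun j => σ⁻¹ (τ j)) (fun j => τ⁻¹ (σ j)) ?_ ?_ ?_ ?_ ?_
    · intro a ha; rw [mem_Ob] at ha ⊢
      exact (sc_tau hP ha).trans (sc_inv_apply σ (τ a))
    · intro a ha; rw [mem_Ob] at ha ⊢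
      have h2 : σ.SameCycle (τ⁻¹ (τ x)) (τ⁻¹ a) := sc_tau (hp_inv hP) ha
      rw [Equiv.Perm.inv_apply_self] at h2
      exact h2.trans (sc_tau (hp_inv hP) (sc_apply σ a))
    · intro a _; simp
    · intro a _; simp
    · intro a _; rfl
  rw [h1] at h0
  have h2 : Sb σ α x + Sb σ α (τ x) = 0 := h0
  exact eq_neg_of_add_eq_zero_right h2

lemma Sb_tau_inv (hP : Pp σ τ) (hE : Ee σ τ α β) (x : Fin n) :
    Sb σ α (τ⁻¹ x) = - Sb σ α x := by
  have := Sb_tau hP hE (τ⁻¹ x)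
  rw [Equiv.Perm.apply_inv_self] at this
  rw [this, neg_neg]

/-! ### the pairing involution on cycles -/

def hhalf (s : Circle1) : Prop := WellOrderingRel s (-s)

lemma hhalf_neg {s : Circle1} (_hs : s ≠ -s) (h : hhalf s) : ¬ hhalf (-s) := by
  intro h2
  unfold hhalf at h h2
  rw [neg_neg] at h2
  exact (Std.Asymm.asymm _ _ h) h2

lemma hhalf_of_not {s : Circle1} (hs : s ≠ -s) (h : ¬ hhalf s) : hhalf (-s) := by
  unfold hhalf at h ⊢
  rw [neg_neg]
  rcases trichotomous_of WellOrderingRel s (-s) with h1 | h1 | h1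
  · exact absurd h1 h
  · exact absurd h1 hs
  · exact h1

variable (σ τ α)

noncomputable def iot (x : Fin n) : Fin n :=
  if Sb σ α x = - Sb σ α x then x else (if hhalf (Sb σ α x) then τ x else τ⁻¹ x)

variable {σ τ α}

lemma Sb_iot (hP : Pp σ τ) (hE : Ee σ τ α β) (x : Fin n) :
    Sb σ α (iot σ τ α x) = - Sb σ α x := by
  unfold iot
  split_ifs with h1 h2
  · exact h1
  · exact Sb_tau hP hE x
  · exact Sb_tau_inv hP hE x

lemma iot_iot (hP : Pp σ τ) (hE : Ee σ τ α β) (x : Fin n) :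
    iot σ τ α (iot σ τ α x) = x := by
  by_cases h1 : Sb σ α x = - Sb σ α x
  · unfold iot; rw [if_pos h1, if_pos h1]
  · by_cases h2 : hhalf (Sb σ α x)
    · have e1 : iot σ τ α x = τ x := by unfold iot; rw [if_neg h1, if_pos h2]
      have e2 : Sb σ α (τ x) = - Sb σ α x := Sb_tau hP hE x
      have e3 : ¬ (Sb σ α (τ x) = - Sb σ α (τ x)) := by
        rw [e2, neg_neg]; intro hcon; exact h1 hcon.symm
      have e4 : ¬ hhalf (Sb σ α (τ x)) := by rw [e2]; exact hhalf_neg h1 h2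
      rw [e1]; unfold iot; rw [if_neg e3, if_neg e4, Equiv.Perm.inv_apply_self]
    · have e1 : iot σ τ α x = τ⁻¹ x := by unfold iot; rw [if_neg h1, if_neg h2]
      have e2 : Sb σ α (τ⁻¹ x) = - Sb σ α x := Sb_tau_inv hP hE x
      have e3 : ¬ (Sb σ α (τ⁻¹ x) = - Sb σ α (τ⁻¹ x)) := by
        rw [e2, neg_neg]; intro hcon; exact h1 hcon.symm
      have e4 : hhalf (Sb σ α (τ⁻¹ x)) := by rw [e2]; exact hhalf_of_not h1 h2
      rw [e1]; unfold iot; rw [if_neg e3, if_pos e4, Equiv.Perm.apply_inv_self]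

lemma sc_iot (hP : Pp σ τ) {x y : Fin n} (h : σ.SameCycle x y) :
    σ.SameCycle (iot σ τ α x) (iot σ τ α y) := by
  unfold iot
  rw [← Sb_congr σ α h]
  split_ifs with h1 h2
  · exact h
  · exact sc_tau hP h
  · exact sc_tau (hp_inv hP) h

lemma k_iot (hP : Pp σ τ) (x : Fin n) : kk σ (iot σ τ α x) = kk σ x := by
  unfold iot; split_ifs
  · rfl
  · exact k_tau hP x
  · exact k_tau (hp_inv hP) x

/-! ### the reversing involution on points -/

variable (σ τ α)

noncomputable def ipt (x : Fin n) : Fin n := rep σ (iot σ τ α x)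

noncomputable def rho (x : Fin n) : Fin n := (σ ^ (-(dd σ x : ℤ))) (ipt σ τ α x)

variable {σ τ α}

lemma ipt_congr (hP : Pp σ τ) {x y : Fin n} (h : σ.SameCycle x y) :
    ipt σ τ α x = ipt σ τ α y := rep_congr σ (sc_iot hP h)

lemma sc_ipt_iot (x : Fin n) : σ.SameCycle (ipt σ τ α x) (iot σ τ α x) :=
  rep_spec σ (iot σ τ α x)

lemma k_ipt (hP : Pp σ τ) (x : Fin n) : kk σ (ipt σ τ α x) = kk σ x := by
  unfold ipt
  rw [k_rep, k_iot hP]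

lemma ipt_ipt (hP : Pp σ τ) (hE : Ee σ τ α β) (x : Fin n) :
    ipt σ τ α (ipt σ τ α x) = rep σ x := by
  have h1 : ipt σ τ α (ipt σ τ α x) = ipt σ τ α (iot σ τ α x) :=
    ipt_congr hP (sc_ipt_iot x)
  rw [h1]
  unfold ipt
  rw [iot_iot hP hE x]

lemma sc_ipt_rho (x : Fin n) : σ.SameCycle (ipt σ τ α x) (rho σ τ α x) :=
  ⟨-(dd σ x : ℤ), rfl⟩

lemma rep_rho (hP : Pp σ τ) (x : Fin n) : rep σ (rho σ τ α x) = ipt σ τ α x := by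
  have h1 := rep_congr σ (sc_ipt_rho (τ := τ) (α := α) x)
  rw [← h1]
  unfold ipt
  exact rep_idem σ _

lemma ipt_rho (hP : Pp σ τ) (hE : Ee σ τ α β) (x : Fin n) :
    ipt σ τ α (rho σ τ α x) = rep σ x := by
  rw [← ipt_congr hP (sc_ipt_rho x)]
  exact ipt_ipt hP hE x

lemma rho_sigma (hP : Pp σ τ) (x : Fin n) :
    rho σ τ α (σ x) = σ⁻¹ (rho σ τ α x) := by
  have hrep : rep σ (σ x) = rep σ x := (rep_congr σ (sc_apply σ x)).symm
  have hipt : ipt σ τ α (σ x) = ipt σ τ α x := (ipt_congr hP (sc_apply σ x)).symm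
  have hd : (σ ^ (dd σ (σ x) : ℤ)) (rep σ x) = (σ ^ ((dd σ x : ℤ) + 1)) (rep σ x) := by
    have hL : (σ ^ (dd σ (σ x) : ℤ)) (rep σ (σ x)) = σ x := dd_spec_z σ (σ x)
    rw [hrep] at hL
    have hR : (σ ^ ((dd σ x : ℤ) + 1)) (rep σ x) = σ x := by
      rw [show (dd σ x : ℤ) + 1 = 1 + (dd σ x : ℤ) by ring, ← zapp, dd_spec_z σ x, zpow_one]
    rw [hL, hR]
  have hdvd : (kk σ (rep σ x) : ℤ) ∣ ((dd σ x : ℤ) + 1) - (dd σ (σ x) : ℤ) :=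
    (zeqz σ (rep σ x)).mp hd
  rw [k_rep] at hdvd
  unfold rho
  rw [hipt]
  have : σ⁻¹ ((σ ^ (-(dd σ x : ℤ))) (ipt σ τ α x)) =
      (σ ^ (-((dd σ x : ℤ) + 1))) (ipt σ τ α x) := by
    rw [show (σ⁻¹ : Equiv.Perm (Fin n)) = σ ^ (-1 : ℤ) by simp, zapp]
    ring_nf
  rw [this]
  refine (zeqz σ (ipt σ τ α x)).mpr ?_
  rw [k_ipt hP]
  have h9 : (kk σ x : ℤ) ∣ ((dd σ x : ℤ) + 1) - (dd σ (σ x) : ℤ) := hdvd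
  have : (-((dd σ x : ℤ) + 1)) - (-(dd σ (σ x) : ℤ)) =
      -(((dd σ x : ℤ) + 1) - (dd σ (σ x) : ℤ)) := by ring
  rw [this]
  exact dvd_neg.mpr h9

lemma rho_rho (hP : Pp σ τ) (hE : Ee σ τ α β) (x : Fin n) :
    rho σ τ α (rho σ τ α x) = x := by
  have hry : rep σ (rho σ τ α x) = ipt σ τ α x := rep_rho hP x
  have hiy : ipt σ τ α (rho σ τ α x) = rep σ x := ipt_rho hP hE x
  have hdy : (σ ^ (dd σ (rho σ τ α x) : ℤ)) (ipt σ τ α x)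
      = (σ ^ (-(dd σ x : ℤ))) (ipt σ τ α x) := by
    have h := dd_spec_z σ (rho σ τ α x)
    rw [hry] at h
    rw [h]; rfl
  have h1 : (kk σ x : ℤ) ∣ (-(dd σ x : ℤ)) - (dd σ (rho σ τ α x) : ℤ) := by
    have h2 := (zeqz σ (ipt σ τ α x)).mp hdy
    rwa [k_ipt hP] at h2
  have goal2 : (σ ^ (-(dd σ (rho σ τ α x) : ℤ))) (rep σ x)
      = (σ ^ ((dd σ x) : ℤ)) (rep σ x) := by
    refine (zeqz σ (rep σ x)).mpr ?_
    rw [k_rep]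
    rw [show (dd σ x : ℤ) - (-(dd σ (rho σ τ α x) : ℤ))
      = -((-(dd σ x : ℤ)) - (dd σ (rho σ τ α x) : ℤ)) by ring]
    exact dvd_neg.mpr h1
  show (σ ^ (-(dd σ (rho σ τ α x) : ℤ))) (ipt σ τ α (rho σ τ α x)) = x
  rw [hiy, goal2, dd_spec_z]

lemma rho_rep (hP : Pp σ τ) (x : Fin n) : rho σ τ α (rep σ x) = ipt σ τ α x := by
  show (σ ^ (-(dd σ (rep σ x) : ℤ))) (ipt σ τ α (rep σ x)) = ipt σ τ α x
  rw [ipt_congr hP (rep_spec σ x)]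
  have h1 : (σ ^ (dd σ (rep σ x) : ℤ)) (rep σ x) = rep σ x := by
    have h := dd_spec_z σ (rep σ x); rwa [rep_idem] at h
  have h2 : (kk σ (rep σ x) : ℤ) ∣ (dd σ (rep σ x) : ℤ) := (zfix σ _ _).mp h1
  rw [k_rep] at h2
  refine (zfix σ (ipt σ τ α x) _).mpr ?_
  rw [k_ipt hP]
  exact dvd_neg.mpr h2

lemma rho_sigma_rho (hP : Pp σ τ) (hE : Ee σ τ α β) (x : Fin n) :
    rho σ τ α (σ (rho σ τ α x)) = σ⁻¹ x := by
  rw [rho_sigma hP, rho_rho hP hE]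

/-! ### the translation part -/

variable (σ τ α)

noncomputable def de (x : Fin n) : Circle1 := -(α (rho σ τ α (σ x)) + α x)

noncomputable def Ff (x : Fin n) (m : ℕ) : Circle1 :=
  ∑ t ∈ Finset.range m, de σ τ α ((σ ^ t) x)

noncomputable def ga (x : Fin n) : Circle1 := Ff σ τ α (rep σ x) (dd σ x)

variable {σ τ α}

lemma de_rho (hP : Pp σ τ) (hE : Ee σ τ α β) (x : Fin n) :
    de σ τ α (rho σ τ α x) = de σ τ α (σ⁻¹ x) := by
  unfold de
  rw [rho_sigma_rho hP hE, Equiv.Perm.apply_inv_self, add_comm]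

lemma ndvd_of_eq {x : Fin n} {a b : ℕ} (hab : a ≤ b) (h : (σ ^ a) x = (σ ^ b) x) :
    kk σ x ∣ b - a := by
  have h1 : (σ ^ (b - a)) ((σ ^ a) x) = (σ ^ a) x := by
    rw [← Equiv.Perm.mul_apply, ← pow_add, Nat.sub_add_cancel hab, h]
  have h2 := (nfix σ ((σ ^ a) x) (b - a)).mp h1
  have h3 : kk σ ((σ ^ a) x) = kk σ x := by
    rw [← zpow_natCast σ a]; exact k_z σ a x
  rwa [h3] at h2

lemma sum_range_orbit (x : Fin n) (g : Fin n → Circle1) :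
    ∑ t ∈ Finset.range (kk σ x), g ((σ ^ t) x) = ∑ j ∈ Ob σ x, g j := by
  refine Finset.sum_bij (fun t _ => (σ ^ t) x) ?_ ?_ ?_ ?_
  · intro a _; rw [mem_Ob]; exact ⟨(a : ℤ), by rw [zpow_natCast]⟩
  · intro a ha b hb hab
    rw [Finset.mem_range] at ha hb
    rcases le_total a b with hle | hle
    · have := ndvd_of_eq hle hab
      have h0 := Nat.eq_zero_of_dvd_of_lt this
      omega
    · have := ndvd_of_eq hle hab.symm
      have h0 := Nat.eq_zero_of_dvd_of_lt this
      omega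
  · intro b hb
    rw [mem_Ob] at hb
    obtain ⟨i, _, _, hieq⟩ := hb.exists_pow_eq''
    refine ⟨i % kk σ x, Finset.mem_range.mpr (Nat.mod_lt _ (kpos σ x)), ?_⟩
    show (σ ^ (i % kk σ x)) x = b
    rw [pow_mod]; exact hieq
  · intro a _; rfl

lemma cycle_sum (hP : Pp σ τ) (hE : Ee σ τ α β) (x : Fin n) :
    ∑ t ∈ Finset.range (kk σ x), de σ τ α ((σ ^ t) x) = 0 := by
  rw [sum_range_orbit]
  have h2 : ∑ j ∈ Ob σ x, α (rho σ τ α (σ j)) = Sb σ α (iot σ τ α x) := by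
    refine Finset.sum_nbij' (fun j => rho σ τ α (σ j)) (fun y => σ⁻¹ (rho σ τ α y))
      ?_ ?_ ?_ ?_ ?_
    · intro a ha; rw [mem_Ob] at ha ⊢
      have e1 : ipt σ τ α (σ a) = ipt σ τ α x := by
        rw [← ipt_congr hP (sc_apply σ a), ← ipt_congr hP ha]
      have c1 : σ.SameCycle (iot σ τ α x) (ipt σ τ α x) := (sc_ipt_iot x).symm
      have c2 : σ.SameCycle (ipt σ τ α (σ a)) (rho σ τ α (σ a)) := sc_ipt_rho (σ a)
      rw [e1] at c2
      exact c1.trans c2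
    · intro y hy; rw [mem_Ob] at hy ⊢
      have e1 : ipt σ τ α y = rep σ x := by
        rw [← ipt_congr hP hy]
        show rep σ (iot σ τ α (iot σ τ α x)) = rep σ x
        rw [iot_iot hP hE]
      have c2 : σ.SameCycle (ipt σ τ α y) (rho σ τ α y) := sc_ipt_rho y
      rw [e1] at c2
      have c1 : σ.SameCycle x (rep σ x) := (rep_spec σ x).symm
      exact (c1.trans c2).trans (sc_inv_apply σ _)
    · intro a _
      show σ⁻¹ (rho σ τ α (rho σ τ α (σ a))) = a
      rw [rho_rho hP hE, Equiv.Perm.inv_apply_self]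
    · intro a _
      show rho σ τ α (σ (σ⁻¹ (rho σ τ α a))) = a
      rw [Equiv.Perm.apply_inv_self, rho_rho hP hE]
    · intro a _; rfl
  have h3 : ∑ j ∈ Ob σ x, de σ τ α j
      = -(∑ j ∈ Ob σ x, α (rho σ τ α (σ j)) + ∑ j ∈ Ob σ x, α j) := by
    unfold de
    rw [← Finset.sum_add_distrib, ← Finset.sum_neg_distrib]
  rw [h3, h2, Sb_iot hP hE]
  show -(- Sb σ α x + Sb σ α x) = 0
  abel

lemma Ff_add_k (hP : Pp σ τ) (hE : Ee σ τ α β) (x : Fin n) (m : ℕ) :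
    Ff σ τ α x (m + kk σ x) = Ff σ τ α x m := by
  induction m with
  | zero =>
    show Ff σ τ α x (0 + kk σ x) = Ff σ τ α x 0
    rw [Nat.zero_add]
    unfold Ff
    rw [cycle_sum hP hE]
    simp
  | succ m ih =>
    rw [show m + 1 + kk σ x = (m + kk σ x) + 1 by omega]
    unfold Ff at ih ⊢
    rw [Finset.sum_range_succ, Finset.sum_range_succ, ih]
    have hpt : (σ ^ (m + kk σ x)) x = (σ ^ m) x := by
      rw [pow_add, Equiv.Perm.mul_apply, pow_k_fix]
    rw [hpt]

lemma Ff_mul (hP : Pp σ τ) (hE : Ee σ τ α β) (x : Fin n) (m s : ℕ) :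
    Ff σ τ α x (m + kk σ x * s) = Ff σ τ α x m := by
  induction s with
  | zero => simp
  | succ s ih =>
    rw [show m + kk σ x * (s + 1) = (m + kk σ x * s) + kk σ x by ring,
      Ff_add_k hP hE, ih]

lemma Ff_eq_of_le (hP : Pp σ τ) (hE : Ee σ τ α β) (x : Fin n) {m m' : ℕ}
    (hle : m ≤ m') (h : (σ ^ m) x = (σ ^ m') x) :
    Ff σ τ α x m' = Ff σ τ α x m := by
  obtain ⟨s, hs⟩ := ndvd_of_eq hle h
  rw [show m' = m + kk σ x * s by omega]
  exact Ff_mul hP hE x m s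

lemma Ff_eq (hP : Pp σ τ) (hE : Ee σ τ α β) (x : Fin n) {m m' : ℕ}
    (h : (σ ^ m) x = (σ ^ m') x) :
    Ff σ τ α x m = Ff σ τ α x m' := by
  rcases le_total m m' with hle | hle
  · exact (Ff_eq_of_le hP hE x hle h).symm
  · exact Ff_eq_of_le hP hE x hle h.symm

lemma ga_sigma (hP : Pp σ τ) (hE : Ee σ τ α β) (x : Fin n) :
    ga σ τ α (σ x) = ga σ τ α x + de σ τ α x := by
  unfold ga
  rw [← rep_congr σ (sc_apply σ x)]
  have he : (σ ^ (dd σ (σ x))) (rep σ x) = (σ ^ (dd σ x + 1)) (rep σ x) := by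
    have hL : (σ ^ (dd σ (σ x))) (rep σ (σ x)) = σ x := dd_spec σ (σ x)
    rw [← rep_congr σ (sc_apply σ x)] at hL
    rw [hL, pow_succ', Equiv.Perm.mul_apply, dd_spec]
  rw [Ff_eq hP hE (rep σ x) he]
  unfold Ff
  rw [Finset.sum_range_succ, dd_spec]

lemma ga_sigma_inv (hP : Pp σ τ) (hE : Ee σ τ α β) (y : Fin n) :
    ga σ τ α (σ⁻¹ y) = ga σ τ α y - de σ τ α (σ⁻¹ y) := by
  have h := ga_sigma hP hE (σ⁻¹ y)
  rw [Equiv.Perm.apply_inv_self] at h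
  rw [h]; abel

lemma grho_sigma (hP : Pp σ τ) (hE : Ee σ τ α β) (x : Fin n) :
    ga σ τ α (rho σ τ α (σ x)) + ga σ τ α (σ x)
      = ga σ τ α (rho σ τ α x) + ga σ τ α x := by
  rw [rho_sigma hP, ga_sigma_inv hP hE, ga_sigma hP hE]
  have hde : de σ τ α (σ⁻¹ (rho σ τ α x)) = de σ τ α x := by
    rw [← rho_sigma hP x, de_rho hP hE (σ x), Equiv.Perm.inv_apply_self]
  rw [hde]; abel

lemma grho_pow (hP : Pp σ τ) (hE : Ee σ τ α β) (x : Fin n) (m : ℕ) :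
    ga σ τ α (rho σ τ α ((σ ^ m) x)) + ga σ τ α ((σ ^ m) x)
      = ga σ τ α (rho σ τ α x) + ga σ τ α x := by
  induction m with
  | zero => simp
  | succ m ih =>
    rw [pow_succ', Equiv.Perm.mul_apply, grho_sigma hP hE, ih]

lemma ga_rep (hP : Pp σ τ) (hE : Ee σ τ α β) (x : Fin n) : ga σ τ α (rep σ x) = 0 := by
  unfold ga
  rw [rep_idem]
  have h : (σ ^ (dd σ (rep σ x))) (rep σ x) = (σ ^ (0 : ℕ)) (rep σ x) := by
    have h2 := dd_spec σ (rep σ x)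
    rw [rep_idem] at h2
    simpa using h2
  rw [Ff_eq hP hE (rep σ x) h]
  simp [Ff]

lemma ga_rho (hP : Pp σ τ) (hE : Ee σ τ α β) (x : Fin n) :
    ga σ τ α (rho σ τ α x) + ga σ τ α x = 0 := by
  have h1 : ga σ τ α (rho σ τ α x) + ga σ τ α x
      = ga σ τ α (rho σ τ α (rep σ x)) + ga σ τ α (rep σ x) := by
    conv_lhs => rw [← dd_spec σ x]
    exact grho_pow hP hE (rep σ x) (dd σ x)
  rw [h1, rho_rep hP, ga_rep hP hE]
  have h2 : ga σ τ α (ipt σ τ α x) = 0 := ga_rep hP hE (x := iot σ τ α x)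
  rw [h2, add_zero]

end StrRev

/-- **Theorem 2.** Every reversible element of `G_n` is strongly reversible in `G_n`. -/
theorem stmt5 {n : ℕ} (f : Gn n) (h : Gn n) (hrev : h * f * h⁻¹ = f⁻¹) :
    ∃ T : Gn n, T * T = 1 ∧ T * f * T⁻¹ = f⁻¹ := by
  classical
  obtain ⟨α, σ⟩ := f
  obtain ⟨β, τ⟩ := h
  have hP : StrRev.Pp σ τ := congrArg Prod.snd hrev
  have hfst := congrArg Prod.fst hrev
  have hE : StrRev.Ee σ τ α β := by
    intro i
    have h2 : -β (τ⁻¹ (τ i)) + (α (τ⁻¹ (τ i)) + β (σ (τ⁻¹ (τ i)))) = -α (σ⁻¹ (τ i)) :=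
      congrFun hfst (τ i)
    rw [Equiv.Perm.inv_apply_self] at h2
    have h3 : β (σ i) - β i + α i + α (σ⁻¹ (τ i))
        = (-β i + (α i + β (σ i))) - (-α (σ⁻¹ (τ i))) := by abel
    rw [h3, h2, sub_self]
  set ρP : Equiv.Perm (Fin n) :=
    ⟨StrRev.rho σ τ α, StrRev.rho σ τ α, StrRev.rho_rho hP hE, StrRev.rho_rho hP hE⟩ with hρP
  have hρinv : ρP⁻¹ = ρP := rfl
  refine ⟨⟨StrRev.ga σ τ α, ρP⟩, ?_, ?_⟩
  · refine Prod.ext (funext fun j => ?_) (Equiv.ext fun j => ?_)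
    · show StrRev.ga σ τ α j + StrRev.ga σ τ α (StrRev.rho σ τ α j) = 0
      rw [add_comm]
      exact StrRev.ga_rho hP hE j
    · show StrRev.rho σ τ α (StrRev.rho σ τ α j) = j
      exact StrRev.rho_rho hP hE j
  · refine Prod.ext (funext fun j => ?_) (Equiv.ext fun j => ?_)
    · show -StrRev.ga σ τ α (StrRev.rho σ τ α j) +
        (α (StrRev.rho σ τ α j) + StrRev.ga σ τ α (σ (StrRev.rho σ τ α j)))
          = -α (σ⁻¹ j)
      rw [StrRev.ga_sigma hP hE, StrRev.de_rho hP hE]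
      show -StrRev.ga σ τ α (StrRev.rho σ τ α j) +
        (α (StrRev.rho σ τ α j) + (StrRev.ga σ τ α (StrRev.rho σ τ α j) +
          (-(α (StrRev.rho σ τ α (σ (σ⁻¹ j))) + α (σ⁻¹ j))))) = -α (σ⁻¹ j)
      rw [Equiv.Perm.apply_inv_self]
      abel
    · show StrRev.rho σ τ α (σ (StrRev.rho σ τ α j)) = σ⁻¹ j
      exact StrRev.rho_sigma_rho hP hE j
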